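/- Let ω < 0 and A, k, f > 0, and suppose that (ω/(Ak))·arsinh(ω/(Ak)) − √(1 + (ω/(Ak))²) − f/(Ak) > 0. Then for every X ∈ (π/2, π] the function Y ↦ A·k·cos X·cosh Y − ω·Y − f has exactly two zeros 0 < Y₁(X) < Y₂(X) in (0, ∞); the function Y₁ is strictly increasing and the function Y₂ is strictly decreasing on (π/2, π); and as X → π/2 from the right, Y₁(X) → −f/ω and Y₂(X) → ∞. -/

import Mathlib

open Real

/-- auxiliary function: `G α β f y = β y - f - α cosh y`. -/
noncomputable def isoG (α β f y : ℝ) : ℝ := β * y - f - α * Real.cosh y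

lemma isoG_hasDerivAt (α β f y : ℝ) :
    HasDerivAt (isoG α β f) (β - α * Real.sinh y) y := by
  have h1 : HasDerivAt (fun y : ℝ => β * y) β y := by
    simpa using (hasDerivAt_id y).const_mul β
  have h2 : HasDerivAt (fun y : ℝ => α * Real.cosh y) (α * Real.sinh y) y :=
    (Real.hasDerivAt_cosh y).const_mul α
  exact (h1.sub_const f).sub h2

lemma isoG_continuous (α β f : ℝ) : Continuous (isoG α β f) := by
  unfold isoG; fun_prop

lemma isoG_strictMonoOn (α β f : ℝ) (hα : 0 < α) :
    StrictMonoOn (isoG α β f) (Set.Icc 0 (Real.arsinh (β / α))) := by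
  apply strictMonoOn_of_deriv_pos (convex_Icc _ _) (isoG_continuous α β f).continuousOn
  intro y hy
  rw [interior_Icc] at hy
  rw [(isoG_hasDerivAt α β f y).deriv]
  have h1 : Real.sinh y < β / α := by
    have := Real.sinh_lt_sinh.2 hy.2
    rwa [Real.sinh_arsinh] at this
  have : α * Real.sinh y < β := by
    have := (mul_lt_mul_of_pos_left h1 hα)
    rwa [mul_div_cancel₀ _ (ne_of_gt hα)] at this
  linarith

lemma isoG_strictAntiOn (α β f : ℝ) (hα : 0 < α) :
    StrictAntiOn (isoG α β f) (Set.Ici (Real.arsinh (β / α))) := by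
  apply strictAntiOn_of_deriv_neg (convex_Ici _) (isoG_continuous α β f).continuousOn
  intro y hy
  rw [interior_Ici] at hy
  rw [(isoG_hasDerivAt α β f y).deriv]
  have h1 : β / α < Real.sinh y := by
    have := Real.sinh_lt_sinh.2 hy
    rwa [Real.sinh_arsinh] at this
  have : β < α * Real.sinh y := by
    have := (mul_lt_mul_of_pos_left h1 hα)
    rwa [mul_div_cancel₀ _ (ne_of_gt hα)] at this
  linarith

lemma iso_sqrt_aux (α β : ℝ) (hα : 0 < α) :
    α * Real.sqrt (1 + (β / α) ^ 2) = Real.sqrt (α ^ 2 + β ^ 2) := by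
  rw [show α * Real.sqrt (1 + (β / α) ^ 2)
      = Real.sqrt (α ^ 2) * Real.sqrt (1 + (β / α) ^ 2) by rw [Real.sqrt_sq hα.le],
    ← Real.sqrt_mul (by positivity)]
  congr 1
  field_simp

lemma iso_cosh_quad (y : ℝ) (hy : 0 ≤ y) : 1 + y ^ 2 / 4 ≤ Real.cosh y := by
  have h1 : Real.cosh y = Real.cosh (y / 2) ^ 2 + Real.sinh (y / 2) ^ 2 := by
    rw [← Real.cosh_two_mul]; ring_nf
  have h2 : (1 : ℝ) ≤ Real.cosh (y / 2) := Real.one_le_cosh _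
  have h3 : y / 2 ≤ Real.sinh (y / 2) := Real.self_le_sinh_iff.2 (by linarith)
  nlinarith

lemma iso_master (α β f : ℝ) (hα : 0 < α) (hβ : 0 < β) (hf : 0 < f)
    (hM : 0 < β * Real.arsinh (β / α) - Real.sqrt (α ^ 2 + β ^ 2) - f) :
    ∃ y₁ y₂ : ℝ, 0 < y₁ ∧ y₁ < y₂ ∧ isoG α β f y₁ = 0 ∧ isoG α β f y₂ = 0 ∧
      (∀ y, y₁ < y → y < y₂ → 0 < isoG α β f y) ∧
      (∀ y, y < y₁ → isoG α β f y < 0) ∧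
      (∀ y, y₂ < y → isoG α β f y < 0) := by
  set s := Real.arsinh (β / α) with hs_def
  have hs : 0 < s := Real.arsinh_pos_iff.2 (by positivity)
  have hGs : 0 < isoG α β f s := by
    have h1 : Real.cosh s = Real.sqrt (1 + (β / α) ^ 2) := Real.cosh_arsinh _
    have h2 := iso_sqrt_aux α β hα
    simp only [isoG, h1]
    linarith
  have hG0 : isoG α β f 0 < 0 := by
    simp only [isoG, Real.cosh_zero]
    linarith
  -- first zero on (0, s)
  obtain ⟨y₁, hy₁mem, hy₁⟩ :
      ∃ y₁ ∈ Set.Ioo (0 : ℝ) s, isoG α β f y₁ = 0 := by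
    have := intermediate_value_Ioo hs.le (isoG_continuous α β f).continuousOn
    obtain ⟨y, hy, hyv⟩ := this (Set.mem_Ioo.2 ⟨hG0, hGs⟩)
    exact ⟨y, hy, hyv⟩
  -- a large point where isoG is negative
  set y₀ : ℝ := max s (4 * β / α) with hy₀_def
  have hy₀s : s ≤ y₀ := le_max_left _ _
  have hy₀b : 4 * β / α ≤ y₀ := le_max_right _ _
  have hy₀pos : 0 < y₀ := lt_of_lt_of_le hs hy₀s
  have hGy₀ : isoG α β f y₀ < 0 := by
    have h1 := iso_cosh_quad y₀ hy₀pos.le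
    have h2 : 4 * β ≤ α * y₀ := by
      rw [div_le_iff₀ hα] at hy₀b; linarith [hy₀b]
    simp only [isoG]
    nlinarith
  obtain ⟨y₂, hy₂mem, hy₂⟩ :
      ∃ y₂ ∈ Set.Ioo s y₀, isoG α β f y₂ = 0 := by
    have := intermediate_value_Ioo' hy₀s (isoG_continuous α β f).continuousOn
    obtain ⟨y, hy, hyv⟩ := this (Set.mem_Ioo.2 ⟨hGy₀, hGs⟩)
    exact ⟨y, hy, hyv⟩
  have hmono := isoG_strictMonoOn α β f hα
  have hanti := isoG_strictAntiOn α β f hα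
  rw [← hs_def] at hmono hanti
  refine ⟨y₁, y₂, hy₁mem.1, hy₁mem.2.trans hy₂mem.1, hy₁, hy₂, ?_, ?_, ?_⟩
  · intro y h1 h2
    rcases le_or_gt y s with hys | hys
    · have := hmono ⟨hy₁mem.1.le, hy₁mem.2.le⟩ ⟨(hy₁mem.1.trans h1).le, hys⟩ h1
      rw [hy₁] at this; exact this
    · have := hanti (Set.mem_Ici.2 hys.le) (Set.mem_Ici.2 hy₂mem.1.le) h2
      rw [hy₂] at this; exact this
  · intro y hy
    rcases le_or_gt 0 y with h0 | h0
    · have := hmono ⟨h0, (hy.trans hy₁mem.2).le⟩ ⟨hy₁mem.1.le, hy₁mem.2.le⟩ hy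
      rw [hy₁] at this; exact this
    · have hc := Real.one_le_cosh y
      simp only [isoG]
      nlinarith
  · intro y hy
    have := hanti (Set.mem_Ici.2 hy₂mem.1.le) (Set.mem_Ici.2 (hy₂mem.1.trans hy).le) hy
    rw [hy₂] at this; exact this

set_option maxHeartbeats 1000000 in
/-- For `ω < 0`, `A, k, f > 0` with
`(ω/(Ak))·arsinh(ω/(Ak)) − √(1+(ω/(Ak))²) − f/(Ak) > 0`, for every
`X ∈ (π/2, π]` the function `Y ↦ Ak·cos X·cosh Y − ωY − f` has exactly two
positive zeros `Y₁(X) < Y₂(X)`; `Y₁` is strictly increasing and `Y₂` strictly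
decreasing on `(π/2, π)`; and `Y₁(X) → −f/ω`, `Y₂(X) → ∞` as `X → π/2⁺`. -/
theorem two_isocline_branches (A k f ω : ℝ) (hA : 0 < A) (hk : 0 < k) (hf : 0 < f)
    (hω : ω < 0)
    (hE : 0 < ω / (A * k) * Real.arsinh (ω / (A * k))
      - Real.sqrt (1 + (ω / (A * k)) ^ 2) - f / (A * k)) :
    ∃ Y₁ Y₂ : ℝ → ℝ,
      (∀ X ∈ Set.Ioc (π / 2) π,
        0 < Y₁ X ∧ Y₁ X < Y₂ X ∧
        A * k * Real.cos X * Real.cosh (Y₁ X) - ω * Y₁ X - f = 0 ∧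
        A * k * Real.cos X * Real.cosh (Y₂ X) - ω * Y₂ X - f = 0 ∧
        ∀ y : ℝ, 0 < y → A * k * Real.cos X * Real.cosh y - ω * y - f = 0 →
          y = Y₁ X ∨ y = Y₂ X) ∧
      StrictMonoOn Y₁ (Set.Ioo (π / 2) π) ∧
      StrictAntiOn Y₂ (Set.Ioo (π / 2) π) ∧
      Filter.Tendsto Y₁ (nhdsWithin (π / 2) (Set.Ioi (π / 2))) (nhds (-f / ω)) ∧
      Filter.Tendsto Y₂ (nhdsWithin (π / 2) (Set.Ioi (π / 2))) Filter.atTop := by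
  have hc : 0 < A * k := by positivity
  have hβ : 0 < -ω := by linarith
  -- translate the hypothesis `hE` into positivity of the max of `isoG (A*k)`
  have hMc : 0 < (-ω) * Real.arsinh ((-ω) / (A * k))
      - Real.sqrt ((A * k) ^ 2 + (-ω) ^ 2) - f := by
    have h2 : Real.arsinh (ω / (A * k)) = -Real.arsinh ((-ω) / (A * k)) := by
      rw [show ω / (A * k) = -((-ω) / (A * k)) by ring, Real.arsinh_neg]
    have h3 : Real.sqrt (1 + (ω / (A * k)) ^ 2)
        = Real.sqrt (1 + ((-ω) / (A * k)) ^ 2) := by ring_nf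
    rw [h2, h3] at hE
    have h5 : 0 < (A * k) * (ω / (A * k) * (-Real.arsinh ((-ω) / (A * k)))
        - Real.sqrt (1 + ((-ω) / (A * k)) ^ 2) - f / (A * k)) := mul_pos hc hE
    have h6 : (A * k) * (ω / (A * k) * (-Real.arsinh ((-ω) / (A * k)))
        - Real.sqrt (1 + ((-ω) / (A * k)) ^ 2) - f / (A * k))
        = (-ω) * Real.arsinh ((-ω) / (A * k))
          - (A * k) * Real.sqrt (1 + ((-ω) / (A * k)) ^ 2) - f := by
      field_simp
    rw [h6, iso_sqrt_aux (A * k) (-ω) hc] at h5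
    exact h5
  -- the max stays positive for all 0 < α ≤ A*k
  have hMall : ∀ α, 0 < α → α ≤ A * k →
      0 < (-ω) * Real.arsinh ((-ω) / α) - Real.sqrt (α ^ 2 + (-ω) ^ 2) - f := by
    intro α hα hαle
    have h1 : (-ω) / (A * k) ≤ (-ω) / α := by
      rw [div_le_div_iff₀ hc hα]; nlinarith
    have h2 : Real.arsinh ((-ω) / (A * k)) ≤ Real.arsinh ((-ω) / α) :=
      Real.arsinh_le_arsinh.2 h1
    have h3 : Real.sqrt (α ^ 2 + (-ω) ^ 2) ≤ Real.sqrt ((A * k) ^ 2 + (-ω) ^ 2) :=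
      Real.sqrt_le_sqrt (by nlinarith)
    nlinarith [mul_le_mul_of_nonneg_left h2 hβ.le]
  -- existence of the two zeros for each X
  have key : ∀ X : ℝ, ∃ y₁ y₂ : ℝ, π / 2 < X → X ≤ π →
      (0 < y₁ ∧ y₁ < y₂ ∧
       A * k * Real.cos X * Real.cosh y₁ - ω * y₁ - f = 0 ∧
       A * k * Real.cos X * Real.cosh y₂ - ω * y₂ - f = 0 ∧
       (∀ y, y₁ < y → y < y₂ → 0 < A * k * Real.cos X * Real.cosh y - ω * y - f) ∧
       (∀ y, y < y₁ → A * k * Real.cos X * Real.cosh y - ω * y - f < 0) ∧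
       (∀ y, y₂ < y → A * k * Real.cos X * Real.cosh y - ω * y - f < 0)) := by
    intro X
    by_cases hX : π / 2 < X ∧ X ≤ π
    · obtain ⟨hX1, hX2⟩ := hX
      have hcos : Real.cos X < 0 :=
        Real.cos_neg_of_pi_div_two_lt_of_lt hX1 (by linarith [Real.pi_pos])
      have hαpos : 0 < -(A * k * Real.cos X) := by nlinarith
      have hαle : -(A * k * Real.cos X) ≤ A * k := by nlinarith [Real.neg_one_le_cos X]
      obtain ⟨y₁, y₂, h1, h2, h3, h4, h5, h6, h7⟩ :=
        iso_master (-(A * k * Real.cos X)) (-ω) f hαpos hβ hf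
          (hMall _ hαpos hαle)
      have hGF : ∀ y, isoG (-(A * k * Real.cos X)) (-ω) f y
          = A * k * Real.cos X * Real.cosh y - ω * y - f := by
        intro y; simp only [isoG]; ring
      refine ⟨y₁, y₂, fun _ _ => ⟨h1, h2, ?_, ?_, ?_, ?_, ?_⟩⟩
      · rw [← hGF]; exact h3
      · rw [← hGF]; exact h4
      · intro y hy hy'; rw [← hGF]; exact h5 y hy hy'
      · intro y hy; rw [← hGF]; exact h6 y hy
      · intro y hy; rw [← hGF]; exact h7 y hy
    · exact ⟨0, 0, fun hh1 hh2 => absurd ⟨hh1, hh2⟩ hX⟩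
  choose Y₁ Y₂ hY using key
  -- positivity implies lying strictly between the two zeros
  have between : ∀ X, π / 2 < X → X ≤ π → ∀ y,
      0 < A * k * Real.cos X * Real.cosh y - ω * y - f → Y₁ X < y ∧ y < Y₂ X := by
    intro X hX1 hX2 y hy
    obtain ⟨h1, h2, h3, h4, h5, h6, h7⟩ := hY X hX1 hX2
    constructor
    · by_contra hcon; push_neg at hcon
      rcases eq_or_lt_of_le hcon with he | hl
      · rw [he] at hy; linarith
      · have := h6 y hl; linarith
    · by_contra hcon; push_neg at hcon
      rcases eq_or_lt_of_le hcon with he | hl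
      · rw [← he] at hy; linarith
      · have := h7 y hl; linarith
  refine ⟨Y₁, Y₂, ?_, ?_, ?_, ?_, ?_⟩
  · -- the two zeros and uniqueness
    intro X hX
    obtain ⟨h1, h2, h3, h4, h5, h6, h7⟩ := hY X hX.1 hX.2
    refine ⟨h1, h2, h3, h4, ?_⟩
    intro y _ hyz
    rcases lt_trichotomy y (Y₁ X) with h | h | h
    · exfalso; have := h6 y h; linarith
    · exact Or.inl h
    · rcases lt_trichotomy y (Y₂ X) with h' | h' | h'
      · exfalso; have := h5 y h h'; linarith
      · exact Or.inr h'
      · exfalso; have := h7 y h'; linarith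
  · -- Y₁ strictly increasing
    intro X hX X' hX' hlt
    have hcos : Real.cos X' < Real.cos X :=
      Real.strictAntiOn_cos ⟨by linarith [Real.pi_pos, hX.1], hX.2.le⟩
        ⟨by linarith [Real.pi_pos, hX'.1], hX'.2.le⟩ hlt
    have h3' := (hY X' hX'.1 hX'.2.le).2.2.1
    have hFpos : 0 < A * k * Real.cos X * Real.cosh (Y₁ X') - ω * Y₁ X' - f := by
      nlinarith [mul_pos (mul_pos hc (sub_pos.2 hcos)) (Real.cosh_pos (Y₁ X'))]
    exact (between X hX.1 hX.2.le _ hFpos).1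
  · -- Y₂ strictly decreasing
    intro X hX X' hX' hlt
    have hcos : Real.cos X' < Real.cos X :=
      Real.strictAntiOn_cos ⟨by linarith [Real.pi_pos, hX.1], hX.2.le⟩
        ⟨by linarith [Real.pi_pos, hX'.1], hX'.2.le⟩ hlt
    have h4' := (hY X' hX'.1 hX'.2.le).2.2.2.1
    have hFpos : 0 < A * k * Real.cos X * Real.cosh (Y₂ X') - ω * Y₂ X' - f := by
      nlinarith [mul_pos (mul_pos hc (sub_pos.2 hcos)) (Real.cosh_pos (Y₂ X'))]
    exact (between X hX.1 hX.2.le _ hFpos).2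
  · -- Y₁ → -f/ω
    have hL : -f / ω = f / (-ω) := by rw [div_neg, neg_div]
    rw [hL, Metric.tendsto_nhds]
    intro ε hε
    set L := f / (-ω) with hLdef
    have hcoshp : 0 < Real.cosh (L + ε) := Real.cosh_pos _
    set δ := min 1 ((-ω) * ε / (A * k * Real.cosh (L + ε))) with hδdef
    have hδpos : 0 < δ := lt_min one_pos (by positivity)
    have hδ1 : δ ≤ 1 := min_le_left _ _
    have hδ2 : δ ≤ (-ω) * ε / (A * k * Real.cosh (L + ε)) := min_le_right _ _
    filter_upwards [Ioo_mem_nhdsGT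
      (show π / 2 < π / 2 + δ by linarith)] with X hX
    obtain ⟨hX1, hX2⟩ := hX
    have hXpi : X ≤ π := by nlinarith [Real.pi_gt_three]
    have hsin : Real.cos X = -Real.sin (X - π / 2) := by
      rw [← Real.sin_pi_div_two_sub, show π / 2 - X = -(X - π / 2) by ring,
        Real.sin_neg]
    have hb : Real.sin (X - π / 2) ≤ X - π / 2 := Real.sin_le (by linarith)
    have hδeq : A * k * ((-ω) * ε / (A * k * Real.cosh (L + ε)))
        = (-ω) * ε / Real.cosh (L + ε) := by field_simp
    have hαX : -(A * k * Real.cos X) < (-ω) * ε / Real.cosh (L + ε) := by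
      have : -(A * k * Real.cos X) = A * k * Real.sin (X - π / 2) := by
        rw [hsin]; ring
      rw [this, ← hδeq]
      have : A * k * Real.sin (X - π / 2) ≤ A * k * (X - π / 2) := by nlinarith
      nlinarith
    have h2 : -(A * k * Real.cos X) * Real.cosh (L + ε) < (-ω) * ε :=
      (lt_div_iff₀ hcoshp).1 hαX
    have h1 : (-ω) * L = f := by
      rw [hLdef]; field_simp
      exact div_self (ne_of_lt hω)
    have hFpos : 0 < A * k * Real.cos X * Real.cosh (L + ε) - ω * (L + ε) - f := by
      nlinarith
    have hAkc : A * k * Real.cos X < 0 := by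
      have hcosneg : Real.cos X < 0 :=
        Real.cos_neg_of_pi_div_two_lt_of_lt hX1 (by linarith [Real.pi_pos])
      exact mul_neg_of_pos_of_neg hc hcosneg
    have hFneg : A * k * Real.cos X * Real.cosh (L - ε) - ω * (L - ε) - f < 0 := by
      nlinarith [Real.cosh_pos (L - ε), mul_pos hβ hε]
    obtain ⟨hlo, hhi⟩ := between X hX1 hXpi (L + ε) hFpos
    have hlow : L - ε < Y₁ X := by
      by_contra hcon; push_neg at hcon
      obtain ⟨h1', h2', h3', h4', h5', h6', h7'⟩ := hY X hX1 hXpi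
      rcases eq_or_lt_of_le hcon with he | hl
      · rw [← he] at hFneg; linarith
      · have := h5' (L - ε) hl (by linarith); linarith
    rw [Real.dist_eq, abs_lt]
    constructor <;> linarith
  · -- Y₂ → ∞
    rw [Filter.tendsto_atTop]
    intro b
    set y' := max b 0 + f / (-ω) + 1 with hy'def
    have hfω : 0 < f / (-ω) := by positivity
    have hy'b : b ≤ y' := by
      rw [hy'def]; have := le_max_left b 0; linarith
    have hy'pos : 0 < y' := by
      rw [hy'def]; have := le_max_right b 0; linarith
    have hcoshp : 0 < Real.cosh y' := Real.cosh_pos _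
    set δ := min 1 ((-ω) / (A * k * Real.cosh y')) with hδdef
    have hδpos : 0 < δ := lt_min one_pos (by positivity)
    have hδ1 : δ ≤ 1 := min_le_left _ _
    have hδ2 : δ ≤ (-ω) / (A * k * Real.cosh y') := min_le_right _ _
    filter_upwards [Ioo_mem_nhdsGT
      (show π / 2 < π / 2 + δ by linarith)] with X hX
    obtain ⟨hX1, hX2⟩ := hX
    have hXpi : X ≤ π := by nlinarith [Real.pi_gt_three]
    have hsin : Real.cos X = -Real.sin (X - π / 2) := by
      rw [← Real.sin_pi_div_two_sub, show π / 2 - X = -(X - π / 2) by ring,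
        Real.sin_neg]
    have hb' : Real.sin (X - π / 2) ≤ X - π / 2 := Real.sin_le (by linarith)
    have hδeq : A * k * ((-ω) / (A * k * Real.cosh y')) = (-ω) / Real.cosh y' := by
      field_simp
    have hαX : -(A * k * Real.cos X) < (-ω) / Real.cosh y' := by
      have h0 : -(A * k * Real.cos X) = A * k * Real.sin (X - π / 2) := by
        rw [hsin]; ring
      rw [h0, ← hδeq]
      have : A * k * Real.sin (X - π / 2) ≤ A * k * (X - π / 2) := by nlinarith
      nlinarith
    have h2 : -(A * k * Real.cos X) * Real.cosh y' < -ω :=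
      (lt_div_iff₀ hcoshp).1 hαX
    have h3 : (-ω) * (f / (-ω)) = f := by
      field_simp
      exact div_self (ne_of_lt hω)
    have h4 : (0:ℝ) ≤ max b 0 := le_max_right _ _
    have hy'eq : -ω * y' = -ω * max b 0 + f + -ω := by
      rw [hy'def, mul_add, mul_add, h3]; ring
    have hFpos : 0 < A * k * Real.cos X * Real.cosh y' - ω * y' - f := by
      nlinarith [mul_nonneg hβ.le h4, hy'eq, h2]
    exact le_trans hy'b (between X hX1 hXpi y' hFpos).2.le
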